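/- Let γ > 1, let g be a real number, t₁ ∈ (0,1), and let q : [0,1] → ℝ be continuous with q(y) > 0 for all y ∈ [0,1]. Set μ² := (γ−1)/(γ+1). Suppose t : [0,1] → ℝ is differentiable on [0,1] with t(y) > 0 for all y, t(1) = t₁, and t'(y) = −(g/q(y)²)·((γ−1)/4)·(1 − γ − 2t(y) + (γ+1)²/(γ−1+2t(y))) for every y ∈ [0,1]. Then for every y ∈ [0,1], t(y) = ((γ+1)/2)·√(1 − (1 − μ⁴(1 + 2t₁/(γ−1))²)·exp(−(γ−1)·g·∫_y^1 q(τ)⁻² dτ)) − (γ−1)/2. -/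

import Mathlib

open Real Set

/-- Uniqueness for the Mach-number ODE: any positive solution on `[0,1]` of
`t' = −(g/q²)·((γ−1)/4)·(1 − γ − 2t + (γ+1)²/(γ−1+2t))` with `t(1) = t₁` equals
the explicit formula
`t(y) = ((γ+1)/2)·√(1 − (1 − μ⁴(1 + 2t₁/(γ−1))²)·exp(−(γ−1)g∫_y^1 q⁻² dτ)) − (γ−1)/2`. -/
theorem mach_ode_uniqueness
    (γ g t₁ : ℝ) (q t : ℝ → ℝ) (hγ : 1 < γ)
    (ht₁ : t₁ ∈ Set.Ioo (0 : ℝ) 1)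
    (hqc : ContinuousOn q (Set.Icc 0 1))
    (hqpos : ∀ y ∈ Set.Icc (0 : ℝ) 1, 0 < q y)
    (htpos : ∀ y ∈ Set.Icc (0 : ℝ) 1, 0 < t y)
    (ht1 : t 1 = t₁)
    (ht' : ∀ y ∈ Set.Icc (0 : ℝ) 1,
      HasDerivWithinAt t
        (-(g / q y ^ 2) * ((γ - 1) / 4) *
          (1 - γ - 2 * t y + (γ + 1) ^ 2 / (γ - 1 + 2 * t y)))
        (Set.Icc 0 1) y) :
    ∀ y ∈ Set.Icc (0 : ℝ) 1,
      t y =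
        (γ + 1) / 2 *
          Real.sqrt (1 -
            (1 - ((γ - 1) / (γ + 1)) ^ 2 * (1 + 2 * t₁ / (γ - 1)) ^ 2) *
              Real.exp (-((γ - 1) * g * ∫ τ in y..1, (q τ ^ 2)⁻¹)))
        - (γ - 1) / 2 := by
  have hγ0 : (0:ℝ) < γ - 1 := by linarith
  have hγ1 : (0:ℝ) < γ + 1 := by linarith
  -- continuity of the integrand
  have hfc : ContinuousOn (fun τ => (q τ ^ 2)⁻¹) (Icc 0 1) :=
    (hqc.pow 2).inv₀ (fun τ hτ => pow_ne_zero 2 (hqpos τ hτ).ne')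
  have hfint : ∀ a ∈ Icc (0:ℝ) 1, ∀ b ∈ Icc (0:ℝ) 1,
      IntervalIntegrable (fun τ => (q τ ^ 2)⁻¹) MeasureTheory.volume a b := by
    intro a ha b hb
    exact (hfc.mono (uIcc_subset_Icc ha hb)).intervalIntegrable
  set I : ℝ → ℝ := fun y => ∫ τ in (0:ℝ)..y, (q τ ^ 2)⁻¹ with hI
  have hIc : ContinuousOn I (Icc 0 1) := by
    have h01 : uIcc (0:ℝ) 1 = Icc 0 1 := uIcc_of_le (by norm_num)
    have := intervalIntegral.continuousOn_primitive_interval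
      (a := (0:ℝ)) (b := (1:ℝ)) (μ := MeasureTheory.volume)
      (f := fun τ => (q τ ^ 2)⁻¹) (by rw [h01]; exact hfc.integrableOn_compact isCompact_Icc)
    rwa [h01] at this
  have htc : ContinuousOn t (Icc 0 1) := fun y hy => (ht' y hy).continuousWithinAt
  -- the conserved quantity
  set v : ℝ → ℝ := fun y => (γ + 1) ^ 2 - (γ - 1 + 2 * t y) ^ 2 with hv
  set h : ℝ → ℝ := fun y => v y * Real.exp (-((γ - 1) * g * I y)) with hh
  have hhc : ContinuousOn h (Icc 0 1) := by
    apply ContinuousOn.mul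
    · exact continuousOn_const.sub
        ((continuousOn_const.add (continuousOn_const.mul htc)).pow 2)
    · exact ((continuousOn_const.mul hIc).neg).rexp
  -- derivative of h is zero on Ico
  have hhx : ∀ x ∈ Ico (0:ℝ) 1, HasDerivWithinAt h 0 (Ici x) x := by
    intro x hx
    have hxI : x ∈ Icc (0:ℝ) 1 := ⟨hx.1, hx.2.le⟩
    have hmemIci : Icc (0:ℝ) 1 ∈ nhdsWithin x (Ici x) := Icc_mem_nhdsGE_of_mem hx
    have hmemIoi : Icc (0:ℝ) 1 ∈ nhdsWithin x (Ioi x) := by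
      refine Filter.mem_of_superset (Ioc_mem_nhdsGT_of_mem ⟨le_refl x, hx.2⟩) ?_
      exact fun z hz => ⟨hx.1.trans hz.1.le, hz.2⟩
    have hIx : HasDerivWithinAt I ((q x ^ 2)⁻¹) (Ici x) x := by
      refine intervalIntegral.integral_hasDerivWithinAt_right
        (hfint 0 ⟨le_refl 0, by norm_num⟩ x hxI)
        ⟨Icc 0 1, hmemIoi, hfc.aestronglyMeasurable measurableSet_Icc⟩
        ((hfc x hxI).mono_of_mem_nhdsWithin hmemIoi)
    have htx : HasDerivWithinAt t
        (-(g / q x ^ 2) * ((γ - 1) / 4) *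
          (1 - γ - 2 * t x + (γ + 1) ^ 2 / (γ - 1 + 2 * t x))) (Ici x) x :=
      (ht' x hxI).mono_of_mem_nhdsWithin hmemIci
    have hvx := (hasDerivWithinAt_const x (Ici x) ((γ+1:ℝ)^2)).sub
      (((htx.const_mul 2).const_add (γ - 1)).pow 2)
    have hE : HasDerivWithinAt (fun y => Real.exp (-((γ - 1) * g * I y)))
        (Real.exp (-((γ - 1) * g * I x)) * -((γ - 1) * g * (q x ^ 2)⁻¹)) (Ici x) x :=
      ((hIx.const_mul ((γ - 1) * g)).neg).exp
    have hcomb := hvx.mul hE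
    have hq2 : q x ^ 2 ≠ 0 := pow_ne_zero 2 (hqpos x hxI).ne'
    have hs : γ - 1 + 2 * t x ≠ 0 := by
      have := htpos x hxI; positivity
    show HasDerivWithinAt
      (fun y => ((γ + 1) ^ 2 - (γ - 1 + 2 * t y) ^ 2) * Real.exp (-((γ - 1) * g * I y)))
      0 (Ici x) x
    convert hcomb using 1
    · rfl
    · rfl
    · rfl
    simp only [Pi.sub_apply, Pi.pow_apply]
    field_simp
    ring
  -- h is constant
  have hconst := constant_of_has_deriv_right_zero hhc hhx
  intro y hy
  have hy1 : h y = h 1 := by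
    rw [hconst y hy, hconst 1 ⟨by norm_num, le_refl 1⟩]
  -- the interval integral
  have hJ : (∫ τ in y..1, (q τ ^ 2)⁻¹) = I 1 - I y := by
    rw [hI]
    exact (intervalIntegral.integral_interval_sub_left
      (hfint 0 ⟨le_refl 0, by norm_num⟩ 1 ⟨by norm_num, le_refl 1⟩)
      (hfint 0 ⟨le_refl 0, by norm_num⟩ y hy)).symm
  set E : ℝ := Real.exp (-((γ - 1) * g * ∫ τ in y..1, (q τ ^ 2)⁻¹)) with hE
  have hvE : v y = v 1 * E := by
    have hsplit : Real.exp (-((γ - 1) * g * I 1))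
        = E * Real.exp (-((γ - 1) * g * I y)) := by
      rw [hE, hJ, ← Real.exp_add]; congr 1; ring
    have h2 : v y * Real.exp (-((γ - 1) * g * I y))
        = v 1 * E * Real.exp (-((γ - 1) * g * I y)) := by
      calc v y * Real.exp (-((γ - 1) * g * I y)) = h y := rfl
        _ = h 1 := hy1
        _ = v 1 * Real.exp (-((γ - 1) * g * I 1)) := rfl
        _ = v 1 * E * Real.exp (-((γ - 1) * g * I y)) := by rw [hsplit]; ring
    exact mul_right_cancel₀ (Real.exp_ne_zero _) h2
  have hsy : 0 < γ - 1 + 2 * t y := by have := htpos y hy; linarith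
  have hX : 1 - (1 - ((γ - 1) / (γ + 1)) ^ 2 * (1 + 2 * t₁ / (γ - 1)) ^ 2) * E
      = ((γ - 1 + 2 * t y) / (γ + 1)) ^ 2 := by
    have hv1 : v 1 = (γ + 1) ^ 2 - (γ - 1 + 2 * t₁) ^ 2 := by rw [hv]; simp [ht1]
    have hkey : (γ - 1 + 2 * t y) ^ 2
        = (γ + 1) ^ 2 - ((γ + 1) ^ 2 - (γ - 1 + 2 * t₁) ^ 2) * E := by
      have h3 : v y = ((γ + 1) ^ 2 - (γ - 1 + 2 * t₁) ^ 2) * E := by rw [hvE, hv1]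
      have h4 : v y = (γ + 1) ^ 2 - (γ - 1 + 2 * t y) ^ 2 := rfl
      linarith [h3, h4.symm.trans h3]
    have h5 : ((γ - 1 + 2 * t y) / (γ + 1)) ^ 2
        = 1 - ((γ + 1) ^ 2 - (γ - 1 + 2 * t₁) ^ 2) / (γ + 1) ^ 2 * E := by
      rw [div_pow, hkey]
      field_simp
    have h6 : (1 - ((γ - 1) / (γ + 1)) ^ 2 * (1 + 2 * t₁ / (γ - 1)) ^ 2)
        = ((γ + 1) ^ 2 - (γ - 1 + 2 * t₁) ^ 2) / (γ + 1) ^ 2 := by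
      field_simp
    rw [h5, h6]
  rw [hX, Real.sqrt_sq (by positivity)]
  field_simp
  ring
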